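/- If X is a strongly star-Lindelöf space and X is the union of fewer than 𝔡 many Hurewicz subspaces, then X is strongly star-Menger. -/

import Mathlib

open Set Filter Topology

/-- `𝒰` is an open cover of the space `X`. -/
def IsOpenCover {X : Type} [TopologicalSpace X] (𝒰 : Set (Set X)) : Prop :=
  (∀ u ∈ 𝒰, IsOpen u) ∧ ⋃₀ 𝒰 = Set.univ

/-- The star of a set `A` with respect to a collection `𝒰`. -/
def st {X : Type} (A : Set X) (𝒰 : Set (Set X)) : Set X :=
  ⋃₀ {u ∈ 𝒰 | (u ∩ A).Nonempty}
/-- Eventual domination `f ≤* g`. -/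
def EvLE (f g : ℕ → ℕ) : Prop := ∀ᶠ n in Filter.atTop, f n ≤ g n

/-- The dominating number `𝔡`. -/
noncomputable def dominatingNumber : Cardinal :=
  sInf {c | ∃ D : Set (ℕ → ℕ),
    (∀ g : ℕ → ℕ, ∃ f ∈ D, EvLE g f) ∧ Cardinal.mk D = c}

/-- The bounding number `𝔟`. -/
noncomputable def boundingNumber : Cardinal :=
  sInf {c | ∃ B : Set (ℕ → ℕ),
    (¬ ∃ g : ℕ → ℕ, ∀ f ∈ B, EvLE f g) ∧ Cardinal.mk B = c}
/-- The Menger property `S_fin(𝒪,𝒪)`. -/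
def MengerSpace (X : Type) [TopologicalSpace X] : Prop :=
  ∀ 𝒰 : ℕ → Set (Set X), (∀ n, IsOpenCover (𝒰 n)) →
    ∃ 𝒱 : ℕ → Set (Set X), (∀ n, (𝒱 n).Finite ∧ 𝒱 n ⊆ 𝒰 n) ∧
      ∀ x : X, ∃ n, x ∈ ⋃₀ 𝒱 n

/-- The Hurewicz property. -/
def HurewiczSpace (X : Type) [TopologicalSpace X] : Prop :=
  ∀ 𝒰 : ℕ → Set (Set X), (∀ n, IsOpenCover (𝒰 n)) →
    ∃ 𝒱 : ℕ → Set (Set X), (∀ n, (𝒱 n).Finite ∧ 𝒱 n ⊆ 𝒰 n) ∧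
      ∀ x : X, ∀ᶠ n in Filter.atTop, x ∈ ⋃₀ 𝒱 n

/-- The star-Menger property. -/
def StarMengerSpace (X : Type) [TopologicalSpace X] : Prop :=
  ∀ 𝒰 : ℕ → Set (Set X), (∀ n, IsOpenCover (𝒰 n)) →
    ∃ 𝒱 : ℕ → Set (Set X), (∀ n, (𝒱 n).Finite ∧ 𝒱 n ⊆ 𝒰 n) ∧
      ∀ x : X, ∃ n, x ∈ st (⋃₀ 𝒱 n) (𝒰 n)

/-- The star-Hurewicz property. -/
def StarHurewiczSpace (X : Type) [TopologicalSpace X] : Prop :=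
  ∀ 𝒰 : ℕ → Set (Set X), (∀ n, IsOpenCover (𝒰 n)) →
    ∃ 𝒱 : ℕ → Set (Set X), (∀ n, (𝒱 n).Finite ∧ 𝒱 n ⊆ 𝒰 n) ∧
      ∀ x : X, ∀ᶠ n in Filter.atTop, x ∈ st (⋃₀ 𝒱 n) (𝒰 n)

/-- The strongly star-Menger property. -/
def StronglyStarMengerSpace (X : Type) [TopologicalSpace X] : Prop :=
  ∀ 𝒰 : ℕ → Set (Set X), (∀ n, IsOpenCover (𝒰 n)) →
    ∃ F : ℕ → Set X, (∀ n, (F n).Finite) ∧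
      ∀ x : X, ∃ n, x ∈ st (F n) (𝒰 n)

/-- The strongly star-Hurewicz property. -/
def StronglyStarHurewiczSpace (X : Type) [TopologicalSpace X] : Prop :=
  ∀ 𝒰 : ℕ → Set (Set X), (∀ n, IsOpenCover (𝒰 n)) →
    ∃ F : ℕ → Set X, (∀ n, (F n).Finite) ∧
      ∀ x : X, ∀ᶠ n in Filter.atTop, x ∈ st (F n) (𝒰 n)

/-- The star-Lindelöf property. -/
def StarLindelofSpace (X : Type) [TopologicalSpace X] : Prop :=
  ∀ 𝒰 : Set (Set X), IsOpenCover 𝒰 →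
    ∃ 𝒱 ⊆ 𝒰, 𝒱.Countable ∧ st (⋃₀ 𝒱) 𝒰 = Set.univ

/-- The strongly star-Lindelöf property. -/
def StronglyStarLindelofSpace (X : Type) [TopologicalSpace X] : Prop :=
  ∀ 𝒰 : Set (Set X), IsOpenCover 𝒰 →
    ∃ C : Set X, C.Countable ∧ st C 𝒰 = Set.univ

lemma st_mono {X : Type} {A B : Set X} (h : A ⊆ B) (𝒰 : Set (Set X)) :
    st A 𝒰 ⊆ st B 𝒰 := by
  apply Set.sUnion_subset_sUnion
  rintro u ⟨hu, y, hy1, hy2⟩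
  exact ⟨hu, y, hy1, h hy2⟩

theorem stmt (X : Type) [TopologicalSpace X] (hX : StronglyStarLindelofSpace X)
    (ι : Type) (Y : ι → Set X)
    (hcard : Cardinal.mk ι < dominatingNumber)
    (hY : ∀ i, HurewiczSpace (Y i))
    (hcover : ⋃ i, Y i = Set.univ) :
    StronglyStarMengerSpace X := by
  intro 𝒰 h𝒰
  by_cases hne : Nonempty X
  swap
  · exact ⟨fun _ => ∅, fun _ => Set.finite_empty, fun x => absurd (⟨x⟩ : Nonempty X) hne⟩
  choose C hCc hCst using fun n => hX (𝒰 n) (h𝒰 n)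
  have hCne : ∀ n, (C n).Nonempty := by
    intro n
    obtain ⟨x⟩ := hne
    have hx : x ∈ st (C n) (𝒰 n) := by rw [hCst n]; trivial
    obtain ⟨u, ⟨hu, y, hy1, hy2⟩, hxu⟩ := hx
    exact ⟨y, hy2⟩
  choose c hc using fun n => (hCc n).exists_eq_range (hCne n)
  set V : ℕ → ℕ → Set X := fun n k => st ((c n) '' Set.Iic k) (𝒰 n) with hVdef
  have hVopen : ∀ n k, IsOpen (V n k) := by
    intro n k
    apply isOpen_sUnion
    rintro u ⟨hu, -⟩
    exact (h𝒰 n).1 u hu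
  have hVmono : ∀ n, Monotone (V n) := by
    intro n j k hjk
    exact st_mono (Set.image_mono (Set.Iic_subset_Iic.2 hjk)) _
  have hVcover : ∀ n (x : X), ∃ k, x ∈ V n k := by
    intro n x
    have hx : x ∈ st (C n) (𝒰 n) := by rw [hCst n]; trivial
    obtain ⟨u, ⟨hu, y, hy1, hy2⟩, hxu⟩ := hx
    rw [hc n] at hy2
    obtain ⟨j, rfl⟩ := hy2
    refine ⟨j, ?_⟩
    have hmem : u ∈ {u ∈ 𝒰 n | (u ∩ (c n '' Set.Iic j)).Nonempty} :=
      ⟨hu, c n j, hy1, ⟨j, Set.self_mem_Iic, rfl⟩⟩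
    exact Set.subset_sUnion_of_mem hmem hxu
  have key : ∀ i, ∃ f : ℕ → ℕ, ∀ x ∈ Y i, ∀ᶠ n in Filter.atTop, x ∈ V n (f n) := by
    intro i
    set 𝒰' : ℕ → Set (Set (Y i)) := fun n => {s | ∃ k, s = Subtype.val ⁻¹' V n k} with h𝒰'
    have hoc : ∀ n, IsOpenCover (𝒰' n) := by
      intro n
      constructor
      · rintro u ⟨k, rfl⟩
        exact (hVopen n k).preimage continuous_subtype_val
      · apply Set.eq_univ_iff_forall.2
        intro y
        obtain ⟨k, hk⟩ := hVcover n y.val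
        exact ⟨Subtype.val ⁻¹' V n k, ⟨k, rfl⟩, hk⟩
    obtain ⟨𝒱, h𝒱, hpt⟩ := hY i 𝒰' hoc
    have hbound : ∀ n, ∃ m, ⋃₀ 𝒱 n ⊆ Subtype.val ⁻¹' V n m := by
      intro n
      obtain ⟨hfin, hsub⟩ := h𝒱 n
      have : ∀ S : Set (Set (Y i)), S.Finite → S ⊆ 𝒰' n →
          ∃ m, ⋃₀ S ⊆ Subtype.val ⁻¹' V n m := by
        intro S hS
        refine Set.Finite.induction_on (motive := fun S _ => S ⊆ 𝒰' n → ∃ m, ⋃₀ S ⊆ Subtype.val ⁻¹' V n m) S hS (fun _ => ⟨0, by simp⟩) ?_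
        intro a S' ha hS' ih hsub'
        obtain ⟨k, rfl⟩ : a ∈ 𝒰' n := hsub' (Set.mem_insert _ _)
        obtain ⟨m, hm⟩ := ih (fun s hs => hsub' (Set.mem_insert_of_mem _ hs))
        refine ⟨max k m, ?_⟩
        rw [Set.sUnion_insert]
        apply Set.union_subset
        · exact (Set.preimage_mono (hVmono n (le_max_left k m)))
        · exact hm.trans (Set.preimage_mono (hVmono n (le_max_right k m)))
      exact this _ hfin hsub
    choose m hm using hbound
    refine ⟨m, fun x hx => ?_⟩
    filter_upwards [hpt ⟨x, hx⟩] with n hn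
    exact hm n hn
  choose f hf using key
  obtain ⟨g, hg⟩ : ∃ g : ℕ → ℕ, ∀ i, ∃ᶠ n in Filter.atTop, f i n < g n := by
    by_contra h
    push_neg at h
    have hdom : ∀ g : ℕ → ℕ, ∃ f' ∈ Set.range f, EvLE g f' := by
      intro g
      obtain ⟨i, hi⟩ := h g
      exact ⟨f i, Set.mem_range_self i, hi⟩
    have hle : dominatingNumber ≤ Cardinal.mk (Set.range f) :=
      csInf_le' ⟨Set.range f, hdom, rfl⟩
    exact absurd (hle.trans Cardinal.mk_range_le) (not_le.2 hcard)
  refine ⟨fun n => c n '' Set.Iic (g n), fun n => (Set.finite_Iic _).image _, ?_⟩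
  intro x
  have hx : x ∈ ⋃ i, Y i := by rw [hcover]; trivial
  obtain ⟨i, hi⟩ := Set.mem_iUnion.1 hx
  obtain ⟨n, hlt, hxn⟩ := ((hg i).and_eventually (hf i x hi)).exists
  exact ⟨n, st_mono (Set.image_mono (Set.Iic_subset_Iic.2 hlt.le)) _ hxn⟩
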